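/- Let 0 < α < 1/2, κ > 0, and h be the inverse of g(u) = ∫₀^u (1 + 2κα²|s|^{2(2α-1)})^{1/2} ds (extended oddly). Then for all t, s ∈ ℝ and all ϑ ∈ [0,1]: |h'(t) - h'(s)| ≤ 2^{1-ϑ}(2κα²)^{-ϑ/2}|h(t) - h(s)|^{(1-2α)ϑ}. -/

import Mathlib

open Real NNReal Filter MeasureTheory Set intervalIntegral

/-- The change-of-variable function `g` (inverse of `h`). -/
noncomputable def gfun (κ α : ℝ) (u : ℝ) : ℝ :=
  ∫ s in (0:ℝ)..u, Real.sqrt (1 + 2*κ*α^2 * |s| ^ (2*(2*α-1)))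

namespace Stmt10Aux

lemma intervalIntegrable_abs_rpow {r : ℝ} (hr : -1 < r) (a b : ℝ) :
    IntervalIntegrable (fun s : ℝ => |s| ^ r) volume a b := by
  have key : ∀ c : ℝ, 0 ≤ c → IntervalIntegrable (fun s : ℝ => |s| ^ r) volume 0 c := by
    intro c hc
    rw [intervalIntegrable_iff, uIoc_of_le hc]
    have h1 : IntegrableOn (fun x : ℝ => x ^ r) (Ioc 0 c) volume := by
      have := intervalIntegrable_iff.mp (intervalIntegrable_rpow' hr (a := 0) (b := c))
      rwa [uIoc_of_le hc] at this
    exact h1.congr_fun (fun x hx => by simp [abs_of_pos hx.1]) measurableSet_Ioc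
  have key' : ∀ c : ℝ, IntervalIntegrable (fun s : ℝ => |s| ^ r) volume 0 c := by
    intro c
    rcases le_total 0 c with hc | hc
    · exact key c hc
    · have := (IntervalIntegrable.iff_comp_neg
        (f := fun s : ℝ => |s| ^ r) (a := 0) (b := -c)).mp (key (-c) (by linarith))
      simp only [neg_zero, neg_neg, abs_neg] at this
      exact this
  exact (key' a).symm.trans (key' b)

/-- The integrand. -/
noncomputable def F (κ α s : ℝ) : ℝ := Real.sqrt (1 + 2*κ*α^2 * |s| ^ (2*(2*α-1)))

variable {κ α : ℝ}

lemma sqrt_abs_rpow (s r : ℝ) : Real.sqrt (|s| ^ (2*r)) = |s| ^ r := by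
  rw [Real.sqrt_eq_rpow, ← Real.rpow_mul (abs_nonneg s)]
  congr 1
  ring

lemma sqrt_mul_abs (κ α s : ℝ) (hκ : 0 < κ) (hα0 : 0 < α) :
    Real.sqrt (2*κ*α^2 * |s| ^ (2*(2*α-1))) = Real.sqrt (2*κ*α^2) * |s| ^ (2*α-1) := by
  rw [Real.sqrt_mul (by positivity), sqrt_abs_rpow]



lemma gfun_eq (κ α u : ℝ) : gfun κ α u = ∫ s in (0:ℝ)..u, F κ α s := rfl

lemma F_one_le (hκ : 0 < κ) (hα0 : 0 < α) (s : ℝ) : 1 ≤ F κ α s := by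
  rw [F, Real.one_le_sqrt]
  have : (0:ℝ) ≤ 2*κ*α^2 * |s| ^ (2*(2*α-1)) := by positivity
  linarith

lemma F_nonneg (s : ℝ) : 0 ≤ F κ α s := Real.sqrt_nonneg _

lemma F_even (s : ℝ) : F κ α (-s) = F κ α s := by rw [F, F, abs_neg]

lemma F_le (hκ : 0 < κ) (hα0 : 0 < α) (s : ℝ) :
    F κ α s ≤ 1 + Real.sqrt (2*κ*α^2) * |s| ^ (2*α-1) := by
  have h1 : Real.sqrt (1 + 2*κ*α^2 * |s| ^ (2*(2*α-1)))
      ≤ 1 + Real.sqrt (2*κ*α^2 * |s| ^ (2*(2*α-1))) := by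
    set x := 2*κ*α^2 * |s| ^ (2*(2*α-1)) with hx
    have hx0 : 0 ≤ x := by positivity
    rw [show (1:ℝ) + Real.sqrt x = Real.sqrt ((1 + Real.sqrt x)^2) from
      (Real.sqrt_sq (by positivity)).symm]
    apply Real.sqrt_le_sqrt
    nlinarith [Real.sq_sqrt hx0, Real.sqrt_nonneg x]
  rw [F]
  rw [sqrt_mul_abs κ α s hκ hα0] at h1
  exact h1

lemma F_meas : Measurable (F κ α) := by
  apply Real.continuous_sqrt.measurable.comp
  exact measurable_const.add (measurable_const.mul (measurable_abs.pow_const _))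

lemma F_contAt {s : ℝ} (hs : s ≠ 0) : ContinuousAt (F κ α) s := by
  apply Real.continuous_sqrt.continuousAt.comp
  apply ContinuousAt.add continuousAt_const
  apply ContinuousAt.mul continuousAt_const
  exact (Real.continuousAt_rpow_const _ _ (Or.inl (abs_ne_zero.mpr hs))).comp
    continuous_abs.continuousAt

lemma F_int (hκ : 0 < κ) (hα0 : 0 < α) (hα1 : α < 1/2) (a b : ℝ) :
    IntervalIntegrable (F κ α) volume a b := by
  have hmaj : IntervalIntegrable (fun s : ℝ => 1 + Real.sqrt (2*κ*α^2) * |s| ^ (2*α-1))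
      volume a b :=
    intervalIntegrable_const.add
      ((intervalIntegrable_abs_rpow (by linarith) a b).const_mul _)
  apply hmaj.mono_fun (F_meas.aestronglyMeasurable)
  filter_upwards with s
  rw [Real.norm_eq_abs, Real.norm_eq_abs, abs_of_nonneg (F_nonneg s),
    abs_of_nonneg (by positivity)]
  exact F_le hκ hα0 s

lemma g_zero : gfun κ α 0 = 0 := by rw [gfun_eq, intervalIntegral.integral_same]

lemma g_sub (hκ : 0 < κ) (hα0 : 0 < α) (hα1 : α < 1/2) (a b : ℝ) :
    gfun κ α b - gfun κ α a = ∫ s in a..b, F κ α s := by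
  rw [gfun_eq, gfun_eq, ← intervalIntegral.integral_add_adjacent_intervals
    (F_int hκ hα0 hα1 0 a) (F_int hκ hα0 hα1 a b)]
  ring

lemma g_mono (hκ : 0 < κ) (hα0 : 0 < α) (hα1 : α < 1/2) : StrictMono (gfun κ α) := by
  intro u v huv
  have h1 : v - u ≤ gfun κ α v - gfun κ α u := by
    rw [g_sub hκ hα0 hα1]
    calc v - u = ∫ _ in u..v, (1:ℝ) := by simp
    _ ≤ ∫ s in u..v, F κ α s := by
        apply intervalIntegral.integral_mono_on huv.le intervalIntegrable_const
          (F_int hκ hα0 hα1 u v)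
        exact fun s _ => F_one_le hκ hα0 s
  linarith

lemma g_odd (u : ℝ) : gfun κ α (-u) = - gfun κ α u := by
  rw [gfun_eq, gfun_eq]
  have h1 : ∫ s in (0:ℝ)..u, F κ α s = ∫ s in (0:ℝ)..u, F κ α (-s) := by
    simp_rw [F_even]
  rw [h1, intervalIntegral.integral_comp_neg (fun s => F κ α s)]
  rw [← intervalIntegral.integral_symm]
  simp

lemma g_hasDeriv (hκ : 0 < κ) (hα0 : 0 < α) (hα1 : α < 1/2) {u : ℝ} (hu : u ≠ 0) :
    HasDerivAt (gfun κ α) (F κ α u) u :=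
  intervalIntegral.integral_hasDerivAt_right (F_int hκ hα0 hα1 0 u)
    (F_meas.stronglyMeasurable.stronglyMeasurableAtFilter)
    (F_contAt hu)

lemma g_lower (hκ : 0 < κ) (hα0 : 0 < α) (hα1 : α < 1/2) {u : ℝ} (hu : 0 ≤ u) :
    Real.sqrt (2*κ*α^2) / (2*α) * u ^ (2*α) ≤ gfun κ α u := by
  have hint1 : IntervalIntegrable (fun s : ℝ => Real.sqrt (2*κ*α^2) * |s| ^ (2*α-1))
      volume 0 u := (intervalIntegrable_abs_rpow (by linarith) 0 u).const_mul _
  have h1 : ∫ s in (0:ℝ)..u, Real.sqrt (2*κ*α^2) * |s| ^ (2*α-1) ≤ gfun κ α u := by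
    rw [gfun_eq]
    apply intervalIntegral.integral_mono_on hu hint1 (F_int hκ hα0 hα1 0 u)
    intro s hs
    have hs0 : 0 ≤ s := hs.1
    have key : Real.sqrt (2*κ*α^2 * |s| ^ (2*(2*α-1))) ≤ F κ α s := by
      rw [F]
      apply Real.sqrt_le_sqrt
      linarith
    calc Real.sqrt (2*κ*α^2) * |s| ^ (2*α-1)
        = Real.sqrt (2*κ*α^2 * |s| ^ (2*(2*α-1))) := (sqrt_mul_abs κ α s hκ hα0).symm
    _ ≤ F κ α s := key
  have h2 : ∫ s in (0:ℝ)..u, Real.sqrt (2*κ*α^2) * |s| ^ (2*α-1)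
      = Real.sqrt (2*κ*α^2) / (2*α) * u ^ (2*α) := by
    rw [intervalIntegral.integral_const_mul]
    have h3 : ∫ s in (0:ℝ)..u, |s| ^ (2*α-1) = ∫ s in (0:ℝ)..u, s ^ (2*α-1) := by
      apply intervalIntegral.integral_congr
      intro s hs
      rw [uIcc_of_le hu] at hs
      simp [abs_of_nonneg hs.1]
    rw [h3, integral_rpow (Or.inl (by linarith))]
    rw [Real.zero_rpow (by linarith)]
    ring_nf
  linarith [h1, h2.symm.le]

end Stmt10Aux

namespace Stmt10Aux

/-- The function `ψ c y = y / sqrt (y² + c)`. -/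
noncomputable def psi (c y : ℝ) : ℝ := y / Real.sqrt (y^2 + c)

lemma psi_hasDeriv {c : ℝ} (hc : 0 < c) (y : ℝ) :
    HasDerivAt (psi c) (c / ((y^2 + c) * Real.sqrt (y^2 + c))) y := by
  have hX : 0 < y^2 + c := by positivity
  have hsne : Real.sqrt (y^2 + c) ≠ 0 := by positivity
  have hss : Real.sqrt (y^2+c) * Real.sqrt (y^2+c) = y^2 + c := Real.mul_self_sqrt hX.le
  have hder1 : HasDerivAt (fun y : ℝ => y^2 + c) (2*y) y := by
    simpa using (hasDerivAt_pow 2 y).add_const c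
  have hder2 : HasDerivAt (fun y : ℝ => Real.sqrt (y^2 + c))
      (y / Real.sqrt (y^2 + c)) y := by
    have h := (Real.hasDerivAt_sqrt hX.ne').comp y hder1
    refine h.congr_deriv ?_
    field_simp
  have hdiv := (hasDerivAt_id y).div hder2 hsne
  refine hdiv.congr_deriv ?_
  rw [Real.sq_sqrt hX.le, id]
  field_simp
  nlinarith [hss, Real.sqrt_nonneg (y^2+c)]

lemma psi_lip {c : ℝ} (hc : 0 < c) (y z : ℝ) :
    |psi c y - psi c z| ≤ 1 / Real.sqrt c * |y - z| := by
  have hb : ∀ x ∈ (Set.univ : Set ℝ), ‖c / ((x^2 + c) * Real.sqrt (x^2 + c))‖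
      ≤ 1 / Real.sqrt c := by
    intro x _
    have hX : 0 < x^2 + c := by positivity
    have h1 : Real.sqrt c ≤ Real.sqrt (x^2+c) := Real.sqrt_le_sqrt (by nlinarith)
    have hsc : 0 < Real.sqrt c := Real.sqrt_pos.mpr hc
    rw [Real.norm_eq_abs, abs_of_nonneg (by positivity),
      div_le_div_iff₀ (by positivity) hsc]
    have : c * Real.sqrt c ≤ (x^2+c) * Real.sqrt (x^2+c) :=
      mul_le_mul (by nlinarith) h1 hsc.le hX.le
    linarith
  have := Convex.norm_image_sub_le_of_norm_hasDerivWithin_le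
    (f := psi c) (f' := fun x => c / ((x^2 + c) * Real.sqrt (x^2 + c)))
    (fun x _ => (psi_hasDeriv hc x).hasDerivWithinAt) hb convex_univ
    (Set.mem_univ z) (Set.mem_univ y)
  rw [Real.norm_eq_abs, Real.norm_eq_abs] at this
  exact this

lemma psi_mem {c : ℝ} (hc : 0 < c) {y : ℝ} (hy : 0 ≤ y) : psi c y ∈ Set.Icc (0:ℝ) 1 := by
  have hX : 0 < y^2 + c := by positivity
  have hs : 0 < Real.sqrt (y^2+c) := Real.sqrt_pos.mpr hX
  constructor
  · exact div_nonneg hy hs.le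
  · rw [psi, div_le_one hs]
    calc y = Real.sqrt (y^2) := by rw [Real.sqrt_sq hy]
    _ ≤ Real.sqrt (y^2 + c) := Real.sqrt_le_sqrt (by linarith)

lemma rpow_sub_le {u v β : ℝ} (hv : 0 ≤ v) (hvu : v ≤ u) (hβ0 : 0 < β) (hβ1 : β ≤ 1) :
    u ^ β - v ^ β ≤ (u - v) ^ β := by
  have key := NNReal.rpow_add_le_add_rpow (Real.toNNReal (u - v)) (Real.toNNReal v)
    hβ0.le hβ1
  have hc : ((Real.toNNReal (u-v) + Real.toNNReal v : NNReal) : ℝ) = u := by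
    rw [NNReal.coe_add, Real.coe_toNNReal _ (by linarith), Real.coe_toNNReal _ hv]
    ring
  have key2 : ((((Real.toNNReal (u-v) + Real.toNNReal v) ^ β : NNReal)) : ℝ)
      ≤ ((Real.toNNReal (u-v) ^ β + Real.toNNReal v ^ β : NNReal) : ℝ) := by
    exact_mod_cast key
  rw [NNReal.coe_rpow, hc, NNReal.coe_add, NNReal.coe_rpow, NNReal.coe_rpow,
    Real.coe_toNNReal _ (by linarith : (0:ℝ) ≤ u - v), Real.coe_toNNReal _ hv] at key2
  linarith

lemma abs_rpow_diff {β : ℝ} (hβ0 : 0 < β) (hβ1 : β ≤ 1) (a b : ℝ) :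
    abs (|a| ^ β - |b| ^ β) ≤ |a - b| ^ β := by
  have main : ∀ x y : ℝ, 0 ≤ y → y ≤ x → |x ^ β - y ^ β| ≤ |x - y| ^ β := by
    intro x y hy hyx
    rw [abs_of_nonneg (by linarith : (0:ℝ) ≤ x - y),
      abs_of_nonneg (sub_nonneg.mpr (Real.rpow_le_rpow hy hyx hβ0.le))]
    exact rpow_sub_le hy hyx hβ0 hβ1
  have step : abs (|a| ^ β - |b| ^ β) ≤ (abs (|a| - |b|)) ^ β := by
    rcases le_total |b| |a| with hab | hab
    · exact main _ _ (abs_nonneg b) hab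
    · rw [abs_sub_comm (|a| ^ β), abs_sub_comm (|a|)]
      exact main _ _ (abs_nonneg a) hab
  exact step.trans
    (Real.rpow_le_rpow (abs_nonneg _) (abs_abs_sub_abs_le_abs_sub a b) hβ0.le)

lemma F_inv_eq {κ α : ℝ} (hκ : 0 < κ) (hα0 : 0 < α) (hα1 : α < 1/2) {x : ℝ} (hx : x ≠ 0) :
    (F κ α x)⁻¹ = psi (2*κ*α^2) (|x| ^ (1-2*α)) := by
  have hc : (0:ℝ) < 2*κ*α^2 := by positivity
  have habs : 0 < |x| := abs_pos.mpr hx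
  set y := |x| ^ (1-2*α) with hy
  have hy0 : 0 < y := Real.rpow_pos_of_pos habs _
  have hysq : y^2 = |x| ^ (2*(1-2*α)) := by
    rw [hy, ← Real.rpow_natCast (|x| ^ (1-2*α)) 2, ← Real.rpow_mul (abs_nonneg x)]
    congr 1
    push_cast
    ring
  have hxp : |x| ^ (2*(2*α-1)) = (y^2)⁻¹ := by
    rw [hysq, ← Real.rpow_neg (abs_nonneg x)]
    congr 1
    ring
  have hy2 : 0 < y^2 + 2*κ*α^2 := by positivity
  rw [F, hxp, psi]
  have h1 : 1 + 2*κ*α^2 * (y^2)⁻¹ = (y^2 + 2*κ*α^2) / y^2 := by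
    field_simp
  rw [h1, Real.sqrt_div' _ (by positivity : (0:ℝ) ≤ y^2), Real.sqrt_sq hy0.le]
  rw [inv_div]

end Stmt10Aux

open Stmt10Aux in
theorem stmt10 (κ α : ℝ) (hκ : 0 < κ) (hα0 : 0 < α) (hα1 : α < 1/2) (h : ℝ → ℝ)
    (hinv1 : Function.LeftInverse h (gfun κ α)) (hinv2 : Function.RightInverse h (gfun κ α)) :
    ∀ t s : ℝ, ∀ ϑ ∈ Set.Icc (0:ℝ) 1,
      |deriv h t - deriv h s|
        ≤ 2 ^ (1-ϑ) * (2*κ*α^2) ^ (-(ϑ/2)) * |h t - h s| ^ ((1-2*α)*ϑ) := by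
  have hc : (0:ℝ) < 2*κ*α^2 := by positivity
  have hβ0 : (0:ℝ) < 1-2*α := by linarith
  have hβ1 : (1:ℝ)-2*α ≤ 1 := by linarith
  -- basic structure of h
  have gmono : StrictMono (gfun κ α) := g_mono hκ hα0 hα1
  have gsurj : Function.Surjective (gfun κ α) := fun t => ⟨h t, hinv2 t⟩
  have hcont : Continuous h := by
    have : h = ⇑(StrictMono.orderIsoOfSurjective _ gmono gsurj).symm := by
      funext r
      apply gmono.injective
      exact (hinv2 r).trans
        (StrictMono.orderIsoOfSurjective_self_symm_apply (gfun κ α) gmono gsurj r).symm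
    rw [this]
    exact OrderIso.continuous _
  have hmono : StrictMono h := fun a b hab =>
    gmono.lt_iff_lt.mp (by rwa [hinv2 a, hinv2 b])
  have h0 : h 0 = 0 := by
    have := hinv1 0
    rwa [g_zero] at this
  have hodd : ∀ r : ℝ, h (-r) = - h r := by
    intro r
    apply gmono.injective
    rw [hinv2, g_odd, hinv2]
  -- derivative of h at points where h r = 0 (i.e. r = 0)
  have hd0 : HasDerivAt h 0 0 := by
    rw [hasDerivAt_iff_tendsto_slope]
    set C := Real.sqrt (2*κ*α^2) / (2*α) with hC
    have hCpos : 0 < C := by positivity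
    set γ := 1/(2*α) with hγ
    have hγ1 : 1 < γ := by
      rw [hγ, lt_div_iff₀ (by linarith : (0:ℝ) < 2*α)]
      linarith
    have bound : ∀ r : ℝ, r ≠ 0 → |slope h 0 r| ≤ C^(-γ) * |r| ^ (γ-1) := by
      have pos_case : ∀ r : ℝ, 0 < r → h r / r ≤ C^(-γ) * r ^ (γ-1) := by
        intro r hr
        have hu : 0 < h r := by
          have := hmono hr
          rwa [h0] at this
        have hglow := g_lower hκ hα0 hα1 hu.le
        rw [hinv2 r] at hglow
        have h2 : (h r) ^ (2*α) ≤ r / C := by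
          rw [le_div_iff₀ hCpos]
          calc h r ^ (2*α) * C = C * h r ^ (2*α) := by ring
          _ ≤ r := hglow
        have hexp : ((h r) ^ (2*α)) ^ γ = h r := by
          rw [← Real.rpow_mul hu.le, hγ, mul_one_div, div_self (by linarith : 2*α ≠ 0),
            Real.rpow_one]
        have h3 : h r ≤ (r / C) ^ γ := by
          rw [← hexp]
          exact Real.rpow_le_rpow (Real.rpow_nonneg hu.le _) h2 (by positivity)
        have h4 : (r / C) ^ γ = C^(-γ) * r ^ γ := by
          rw [Real.div_rpow hr.le hCpos.le, Real.rpow_neg hCpos.le]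
          ring
        rw [div_le_iff₀ hr]
        have h5 : C^(-γ) * r ^ γ = C^(-γ) * r ^ (γ-1) * r := by
          rw [show γ = (γ-1) + 1 by ring, Real.rpow_add hr, Real.rpow_one]
          ring_nf
        exact h5 ▸ (h4 ▸ h3)
      intro r hr
      have hslope : slope h 0 r = h r / r := by
        rw [slope_def_field, h0, sub_zero, sub_zero]
      rcases lt_or_gt_of_ne hr with hneg | hpos
      · have hpos' : 0 < -r := by linarith
        have := pos_case (-r) hpos'
        rw [hodd r] at this
        have heq : h r / r = (- h r)/(-r) := by
          field_simp
        have hhr : h r ≤ 0 := by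
          have := hmono hneg
          rw [h0] at this
          exact this.le
        have hnn : 0 ≤ (- h r)/(-r) := div_nonneg (by linarith) (by linarith)
        rw [hslope, heq, abs_of_nonneg hnn, abs_of_neg hneg]
        exact this
      · have := pos_case r hpos
        rw [hslope, abs_of_nonneg (div_nonneg ?_ hpos.le), abs_of_pos hpos]
        · exact this
        · have := hmono hpos
          rw [h0] at this
          exact this.le
    apply squeeze_zero_norm' (a := fun r : ℝ => C^(-γ) * |r| ^ (γ-1))
    · filter_upwards [self_mem_nhdsWithin] with r hr
      rw [Real.norm_eq_abs]
      exact bound r hr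
    · have hcontB : ContinuousAt (fun r : ℝ => C^(-γ) * |r| ^ (γ-1)) 0 :=
        continuousAt_const.mul
          (continuous_abs.continuousAt.rpow_const (Or.inr (by linarith)))
      have := hcontB.tendsto
      simp only [abs_zero, Real.zero_rpow (by linarith : γ - 1 ≠ 0), mul_zero] at this
      exact this.mono_left nhdsWithin_le_nhds
  -- the formula for the derivative of h
  have hd : ∀ r : ℝ, deriv h r = psi (2*κ*α^2) (|h r| ^ (1-2*α)) := by
    intro r
    by_cases hr : h r = 0
    · have hr0 : r = 0 := by
        have := hinv2 r
        rw [hr, g_zero] at this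
        exact this.symm
      subst hr0
      rw [hd0.deriv]
      simp [psi, hr, Real.zero_rpow hβ0.ne']
    · have hF1 : (1:ℝ) ≤ F κ α (h r) := F_one_le hκ hα0 _
      have hda : HasDerivAt h (F κ α (h r))⁻¹ r :=
        HasDerivAt.of_local_left_inverse hcont.continuousAt
          (g_hasDeriv hκ hα0 hα1 hr) (by linarith) (Eventually.of_forall hinv2)
      rw [hda.deriv, F_inv_eq hκ hα0 hα1 hr]
  -- final assembly
  intro t s ϑ hϑ
  obtain ⟨hϑ0, hϑ1⟩ := hϑ
  set c := 2*κ*α^2 with hcdef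
  set yt := |h t| ^ (1-2*α) with hyt
  set ys := |h s| ^ (1-2*α) with hys
  set X := |deriv h t - deriv h s| with hX
  have hXnn : (0:ℝ) ≤ X := abs_nonneg _
  have hX2 : X ≤ 2 := by
    rw [hX, hd t, hd s]
    have h1 := psi_mem hc (Real.rpow_nonneg (abs_nonneg (h t)) (1-2*α))
    have h2 := psi_mem hc (Real.rpow_nonneg (abs_nonneg (h s)) (1-2*α))
    rw [abs_le]
    constructor <;> [linarith [h1.1, h2.2]; linarith [h1.2, h2.1]]
  have hXB : X ≤ 1 / Real.sqrt c * |h t - h s| ^ (1-2*α) := by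
    rw [hX, hd t, hd s]
    calc |psi c yt - psi c ys| ≤ 1 / Real.sqrt c * |yt - ys| := psi_lip hc yt ys
    _ ≤ 1 / Real.sqrt c * |h t - h s| ^ (1-2*α) := by
        apply mul_le_mul_of_nonneg_left _ (by positivity)
        exact abs_rpow_diff hβ0 hβ1 (h t) (h s)
  have hBnn : (0:ℝ) ≤ 1 / Real.sqrt c * |h t - h s| ^ (1-2*α) := by positivity
  have hsum : (1-ϑ) + ϑ = (1:ℝ) := by ring
  calc X = X ^ ((1-ϑ) + ϑ) := by rw [hsum, Real.rpow_one]
  _ = X ^ (1-ϑ) * X ^ ϑ := Real.rpow_add' hXnn (by rw [hsum]; norm_num)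
  _ ≤ 2 ^ (1-ϑ) * (1 / Real.sqrt c * |h t - h s| ^ (1-2*α)) ^ ϑ := by
      apply mul_le_mul
      · exact Real.rpow_le_rpow hXnn hX2 (by linarith)
      · exact Real.rpow_le_rpow hXnn hXB hϑ0
      · exact Real.rpow_nonneg hXnn _
      · exact Real.rpow_nonneg (by norm_num) _
  _ = 2 ^ (1-ϑ) * c ^ (-(ϑ/2)) * |h t - h s| ^ ((1-2*α)*ϑ) := by
      rw [Real.mul_rpow (by positivity) (Real.rpow_nonneg (abs_nonneg _) _)]
      rw [← Real.rpow_mul (abs_nonneg _)]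
      have hsqrt : 1 / Real.sqrt c = c ^ (-(1/2) : ℝ) := by
        rw [Real.rpow_neg hc.le, Real.sqrt_eq_rpow, one_div]
      rw [hsqrt, ← Real.rpow_mul hc.le, show (-(1/2):ℝ)*ϑ = -(ϑ/2) by ring]
      ring
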